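/- Let V ⊆ ℓ² be a pseudo-convex domain with plurisubharmonic exhaustion function η ∈ C^∞_F(V), and set V_τ = {z ∈ V : η(z) ≤ τ} and V°_τ = interior of V_τ. Then: (1) for each τ ∈ ℝ there exists C(τ) > 0 such that |η(z) − η(z')| ≤ C(τ) ||z − z'|| for all z, z' ∈ V_τ; (2) for all τ₁ < τ₂, V_{τ₁} ⊂∘ V°_{τ₂}; (3) for every S ⊂∘ V there exists τ ∈ ℝ with S ⊂∘ V°_τ. -/

import Mathlib

open MeasureTheory Filter Metric Set
open scoped ENNReal NNReal Topology ComplexOrder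

noncomputable section


noncomputable section

abbrev H : Type := lp (fun _ : ℕ => ℂ) 2

/-- The direction vector: `(true, j) ↦ e_j` (the `x_j` direction) and
`(false, j) ↦ √-1 • e_j` (the `y_j` direction). -/
noncomputable def dir : Bool × ℕ → H :=
  fun d => if d.1 then lp.single 2 d.2 (1 : ℂ) else lp.single 2 d.2 Complex.I

/-- The partial derivative of `f` at `z` in the direction `v` (junk value if it does not exist):
`lim_{ℝ ∋ τ → 0} (f (z + τ • v) - f z)/τ`. -/
noncomputable def pder (v : H) (f : H → ℂ) (z : H) : ℂ :=
  deriv (fun τ : ℝ => f (z + τ • v)) 0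

/-- Existence of the partial derivative of `f` at `z` in the direction `v`. -/
def HasPD (v : H) (f : H → ℂ) (z : H) : Prop :=
  DifferentiableAt ℝ (fun τ : ℝ => f (z + τ • v)) 0

/-- `coordD (true, j) = D_{x_j}`, `coordD (false, j) = D_{y_j}`. -/
noncomputable def coordD (d : Bool × ℕ) (f : H → ℂ) : H → ℂ := pder (dir d) f

/-- Iterated coordinatewise partial derivatives. -/
noncomputable def iterD : List (Bool × ℕ) → (H → ℂ) → H → ℂ
  | [], f => f
  | d :: L, f => coordD d (iterD L f)

/-- `f ∈ C^k(V)` : all partial derivatives of order `< k` exist on `V`, and all iterated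
partial derivatives of order `≤ k` are continuous on `V`. -/
def MemCk (V : Set H) (k : ℕ) (f : H → ℂ) : Prop :=
  (∀ L : List (Bool × ℕ), L.length ≤ k → ContinuousOn (iterD L f) V) ∧
  (∀ L : List (Bool × ℕ), L.length < k → ∀ d : Bool × ℕ, ∀ z ∈ V, HasPD (dir d) (iterD L f) z)

/-- `f ∈ C^∞(V)`. -/
def MemCinf (V : Set H) (f : H → ℂ) : Prop := ∀ k : ℕ, MemCk V k f

/-- `f ∈ C^k_b(V)` : moreover `f` and its partial derivatives up to order `k` are bounded. -/
def MemCkb (V : Set H) (k : ℕ) (f : H → ℂ) : Prop :=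
  MemCk V k f ∧ ∀ L : List (Bool × ℕ), L.length ≤ k → ∃ M : ℝ, ∀ z ∈ V, ‖iterD L f z‖ ≤ M

/-- `S ⊂∘ V` : `S` is uniformly included in `V`. -/
def UnifIncl (S V : Set H) : Prop :=
  ∃ r R : ℝ, 0 < r ∧ 0 < R ∧ (∀ z ∈ S, Metric.ball z r ⊆ V) ∧ S ⊆ Metric.ball 0 R

/-- The support of `f` relative to `V` (the closure, in the subspace topology of `V`,
of `{z ∈ V | f z ≠ 0}`). -/
def suppIn (V : Set H) (f : H → ℂ) : Set H := V ∩ closure {z | z ∈ V ∧ f z ≠ 0}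

/-- `f ∈ C^k_0(V)`. -/
def MemCkZero (V : Set H) (k : ℕ) (f : H → ℂ) : Prop :=
  MemCkb V k f ∧ UnifIncl (suppIn V f) V

/-- `f ∈ C^∞_0(V)`. -/
def MemCinfZero (V : Set H) (f : H → ℂ) : Prop := ∀ k : ℕ, MemCkZero V k f

/-- `∂_j f`. -/
noncomputable def pd (j : ℕ) (f : H → ℂ) (z : H) : ℂ :=
  (coordD (true, j) f z - Complex.I * coordD (false, j) f z) / 2

/-- `∂̄_j f`. -/
noncomputable def dbar (j : ℕ) (f : H → ℂ) (z : H) : ℂ :=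
  (coordD (true, j) f z + Complex.I * coordD (false, j) f z) / 2

/-- `δ_j f = ∂_j f - (z̄_j/(2 a_j²)) f`. -/
noncomputable def deltaOp (a : ℕ → ℝ) (j : ℕ) (f : H → ℂ) (z : H) : ℂ :=
  pd j f z - (starRingEnd ℂ) (z j) / (2 * (a j : ℂ) ^ 2) * f z

/-- The boundedness condition defining `C¹_F(V)`:
`sup_E (|f| + ∑_i (|D_{x_i} f|² + |D_{y_i} f|²)) < ∞` for every `E ⊂∘ V`. -/
def FBound (V : Set H) (f : H → ℂ) : Prop :=
  ∀ E : Set H, UnifIncl E V → ∃ M : ℝ, ∀ z ∈ E,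
    ENNReal.ofReal ‖f z‖ +
      ∑' j : ℕ, (ENNReal.ofReal (‖coordD (true, j) f z‖ ^ 2) +
        ENNReal.ofReal (‖coordD (false, j) f z‖ ^ 2)) ≤ ENNReal.ofReal M

/-- `f ∈ C¹_F(V)`. -/
def MemC1F (V : Set H) (f : H → ℂ) : Prop := MemCk V 1 f ∧ FBound V f

/-- `f ∈ C^∞_{0,F}(V) = C^∞_0(V) ∩ C¹_F(V)`. -/
def MemC0F (V : Set H) (f : H → ℂ) : Prop := MemCinfZero V f ∧ MemC1F V f

/-- Iterated Wirtinger derivatives: `(true, j) ↦ ∂_j`, `(false, j) ↦ ∂̄_j`. -/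
noncomputable def wIter : List (Bool × ℕ) → (H → ℂ) → H → ℂ
  | [], f => f
  | (b, j) :: L, f => if b then pd j (wIter L f) else dbar j (wIter L f)

/-- `f ∈ C^∞_{0,F^∞}(V)` : `f ∈ C^∞_0(V)` and `∂_α ∂̄_β f ∈ C¹_F(V)` for all
finitely supported multi-indices `α`, `β`. -/
def MemC0Finf (V : Set H) (f : H → ℂ) : Prop :=
  MemCinfZero V f ∧
  ∀ Lα Lβ : List ℕ,
    MemC1F V (wIter (Lα.map (fun i => (true, i)) ++ Lβ.map (fun j => (false, j))) f)

/-- A real-valued function regarded as a complex-valued one. -/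
def cplx (φ : H → ℝ) : H → ℂ := fun z => (φ z : ℂ)

/-- The Levi form `∑_{1 ≤ i,j ≤ n} (∂_i ∂̄_j η)(z) ζ_i conj(ζ_j)`. -/
noncomputable def herm (η : H → ℂ) (n : ℕ) (z : H) (ζ : ℕ → ℂ) : ℂ :=
  ∑ i ∈ Finset.range n, ∑ j ∈ Finset.range n,
    pd i (dbar j η) z * ζ i * (starRingEnd ℂ) (ζ j)

/-- Plurisubharmonicity inequality (the order on `ℂ` is the `ComplexOrder`). -/
def PSH (V : Set H) (η : H → ℂ) : Prop :=
  ∀ n : ℕ, ∀ z ∈ V, ∀ ζ : ℕ → ℂ, 0 ≤ herm η n z ζ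

/-- `α` is an exhaustion function of `V`. -/
def Exhausts (V : Set H) (α : H → ℝ) : Prop :=
  ∀ τ : ℝ, UnifIncl {z | z ∈ V ∧ α z ≤ τ} V

/-- `η` is a plurisubharmonic exhaustion function of `V` of class `C^∞_F(V)`. -/
def IsPSHExhaustion (V : Set H) (η : H → ℝ) : Prop :=
  MemCinf V (cplx η) ∧ FBound V (cplx η) ∧ Exhausts V η ∧ PSH V (cplx η)

/-- `V` is a pseudo-convex domain in `ℓ²`. -/
def Pseudoconvex (V : Set H) : Prop :=
  IsOpen V ∧ V.Nonempty ∧ ∃ η : H → ℝ, IsPSHExhaustion V η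

/-- `d(E₁, E₂)`, with value `∞` when either set is empty. -/
noncomputable def setEDist (E₁ E₂ : Set H) : ℝ≥0∞ :=
  ⨅ z₁ ∈ E₁, ⨅ z₂ ∈ E₂, edist z₁ z₂

/-- `d_V(S) = min{d(S, ∂V), 1/sup_{z ∈ S} ‖z‖}` (conventions `1/0 = ∞`, `1/∞ = 0`). -/
noncomputable def dV (V S : Set H) : ℝ≥0∞ :=
  min (setEDist S (frontier V)) (⨆ z ∈ S, (‖z‖₊ : ℝ≥0∞))⁻¹

/-- The Gaussian probability measure `𝒩_σ` on `ℂ`. -/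
noncomputable def gauss (σ : ℝ) : Measure ℂ :=
  volume.withDensity fun z =>
    ENNReal.ofReal ((2 * Real.pi * σ ^ 2)⁻¹ * Real.exp (-(z.re ^ 2 + z.im ^ 2) / (2 * σ ^ 2)))

/-- `P` is the Borel probability measure on `ℓ²` induced by the product of the Gaussian
measures `𝒩_{a_i}`, characterized through its finite-dimensional cylinder marginals. -/
def IsGaussMeasure [MeasurableSpace H] (a : ℕ → ℝ) (P : Measure H) : Prop :=
  IsProbabilityMeasure P ∧
  ∀ (n : ℕ) (E : ℕ → Set ℂ), (∀ i, MeasurableSet (E i)) →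
    P {z : H | ∀ i < n, z i ∈ E i} = ∏ i ∈ Finset.range n, gauss (a i) (E i)

namespace PCAux

lemma abs_le_abs_of_uIcc {s a : ℝ} (hs : s ∈ Set.uIcc 0 a) : |s| ≤ |a| := by
  rcases Set.mem_uIcc.1 hs with ⟨h1, h2⟩ | ⟨h1, h2⟩ <;>
    rcases abs_cases s with ⟨e1, _⟩ | ⟨e1, _⟩ <;>
    rcases abs_cases a with ⟨e2, _⟩ | ⟨e2, _⟩ <;> linarith

lemma shift_hasDerivAt {f : H → ℂ} {v p : H} {s : ℝ}
    (h : DifferentiableAt ℝ (fun τ : ℝ => f (p + s • v + τ • v)) 0) :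
    HasDerivAt (fun τ : ℝ => f (p + τ • v)) (pder v f (p + s • v)) s := by
  have h1 : HasDerivAt (fun τ : ℝ => f (p + s • v + τ • v)) (pder v f (p + s • v))
      ((fun τ : ℝ => τ - s) s) := by
    simpa only [pder, sub_self] using h.hasDerivAt
  have h2 : HasDerivAt (fun τ : ℝ => τ - s) 1 s := by
    simpa using (hasDerivAt_id s).sub_const s
  have h3 := HasDerivAt.scomp (h := fun τ : ℝ => τ - s)
    (g₁ := fun τ : ℝ => f (p + s • v + τ • v)) s h1 h2
  have efun : ((fun τ : ℝ => f (p + s • v + τ • v)) ∘ (fun τ : ℝ => τ - s))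
      = fun τ : ℝ => f (p + τ • v) := by
    funext τ
    simp only [Function.comp_apply]
    congr 1
    rw [sub_smul]
    abel
  rw [efun] at h3
  simpa using h3

lemma lemB {V : Set H} (hV : IsOpen V) (f : H → ℂ) (v m : H) (c : ℝ) {q : H} (hq : q ∈ V)
    (hPD : ∀ p ∈ V, DifferentiableAt ℝ (fun τ : ℝ => f (p + τ • v)) 0)
    (hC : ContinuousAt (pder v f) q) :
    HasDerivAt (fun h : ℝ => f (q + h • m + (h * c) • v) - f (q + h • m))
      (c • pder v f q) 0 := by
  rw [hasDerivAt_iff_isLittleO, Asymptotics.isLittleO_iff]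
  intro C hC0
  obtain ⟨δ₁, hδ₁, hb₁⟩ := Metric.continuousAt_iff.1 hC (C / (|c| + 1)) (by positivity)
  obtain ⟨δ₂, hδ₂, hb₂⟩ := Metric.isOpen_iff.1 hV q hq
  have hδ : 0 < min δ₁ δ₂ := lt_min hδ₁ hδ₂
  have hden : (0:ℝ) < ‖m‖ + |c| * ‖v‖ + 1 := by positivity
  filter_upwards [Metric.ball_mem_nhds (0:ℝ) (div_pos hδ hden)] with h hh
  rw [Metric.mem_ball, Real.dist_eq, sub_zero] at hh
  have hmem : ∀ s ∈ Set.uIcc 0 (h * c), dist (q + h • m + s • v) q < min δ₁ δ₂ := by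
    intro s hs
    have h1 : |s| ≤ |h| * |c| := by
      simpa [abs_mul] using abs_le_abs_of_uIcc hs
    have h2 : dist (q + h • m + s • v) q ≤ |h| * ‖m‖ + |s| * ‖v‖ := by
      rw [dist_eq_norm]
      calc ‖q + h • m + s • v - q‖ = ‖h • m + s • v‖ := by congr 1; abel
        _ ≤ ‖h • m‖ + ‖s • v‖ := norm_add_le _ _
        _ = |h| * ‖m‖ + |s| * ‖v‖ := by
            rw [norm_smul, norm_smul, Real.norm_eq_abs, Real.norm_eq_abs]
    have h3 : |h| * ‖m‖ + |s| * ‖v‖ ≤ |h| * (‖m‖ + |c| * ‖v‖ + 1) := by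
      have h4 := mul_le_mul_of_nonneg_right h1 (norm_nonneg v)
      nlinarith [abs_nonneg h, norm_nonneg m, norm_nonneg v]
    have h5 : |h| * (‖m‖ + |c| * ‖v‖ + 1) < min δ₁ δ₂ := by
      have := mul_lt_mul_of_pos_right hh hden
      rwa [div_mul_cancel₀ _ (ne_of_gt hden)] at this
    linarith
  set D := pder v f q with hD
  have h5 : ∀ s : ℝ, HasDerivAt (fun s : ℝ => s • D) D s := by
    intro s
    simpa using (hasDerivAt_id s).smul_const D
  have hg : ∀ s ∈ Set.uIcc 0 (h * c),
      HasDerivWithinAt (fun s : ℝ => f (q + h • m + s • v) - s • D)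
        (pder v f (q + h • m + s • v) - D) (Set.uIcc 0 (h * c)) s := by
    intro s hs
    have hmemV : q + h • m + s • v ∈ V :=
      hb₂ (Metric.mem_ball.2 (lt_of_lt_of_le (hmem s hs) (min_le_right _ _)))
    have hsh := shift_hasDerivAt (f := f) (v := v) (p := q + h • m) (s := s) (hPD _ hmemV)
    exact (hsh.sub (h5 s)).hasDerivWithinAt
  have hbd : ∀ s ∈ Set.uIcc 0 (h * c),
      ‖pder v f (q + h • m + s • v) - D‖ ≤ C / (|c| + 1) := by
    intro s hs
    have := hb₁ (lt_of_lt_of_le (hmem s hs) (min_le_left _ _))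
    rw [dist_eq_norm] at this
    exact this.le
  have hmvt := Convex.norm_image_sub_le_of_norm_hasDerivWithin_le hg hbd (convex_uIcc _ _)
      Set.left_mem_uIcc Set.right_mem_uIcc
  simp only [zero_smul, add_zero, zero_mul, sub_self, sub_zero, mul_zero, smul_zero] at hmvt ⊢
  have e1 : f (q + h • m + (h * c) • v) - f (q + h • m) - h • (c • D)
      = (f (q + h • m + (h * c) • v) - (h * c) • D) - f (q + h • m) := by
    rw [smul_smul]
    abel
  rw [e1]
  refine le_trans hmvt ?_
  rw [Real.norm_eq_abs, Real.norm_eq_abs, abs_mul]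
  have hc1 : (0:ℝ) < |c| + 1 := by positivity
  have e2 : C / (|c| + 1) * (|h| * |c|) = C * |h| * (|c| / (|c| + 1)) := by
    field_simp
  rw [e2]
  have h6 : |c| / (|c| + 1) ≤ 1 := by
    rw [div_le_one hc1]
    linarith [abs_nonneg c]
  nlinarith [abs_nonneg h, mul_nonneg (le_of_lt hC0) (abs_nonneg h)]

end PCAux

namespace PCAux

noncomputable def Wv (c : ℕ → ℂ) (n : ℕ) : H := ∑ j ∈ Finset.range n, lp.single 2 j (c j)

noncomputable def Phi (f : H → ℂ) (c : ℕ → ℂ) (n : ℕ) (q : H) : ℂ :=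
  ∑ j ∈ Finset.range n,
    ((c j).re • pder (dir (true, j)) f q + (c j).im • pder (dir (false, j)) f q)

lemma dir_true (n : ℕ) : dir (true, n) = lp.single 2 n 1 := rfl

lemma dir_false (n : ℕ) : dir (false, n) = lp.single 2 n Complex.I := rfl

lemma single_decomp (n : ℕ) (a : ℂ) :
    lp.single 2 n a = a.re • dir (true, n) + a.im • dir (false, n) := by
  rw [dir_true, dir_false, ← lp.single_smul, ← lp.single_smul]
  apply lp.ext
  funext j
  by_cases hj : j = n
  · subst hj
    simp only [lp.coeFn_add, Pi.add_apply, lp.single_apply_self]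
    rw [Complex.real_smul, Complex.real_smul, mul_one, Complex.re_add_im]
  · simp only [lp.coeFn_add, Pi.add_apply, lp.single_apply_ne _ _ _ hj, add_zero]

lemma derivW {V : Set H} (hV : IsOpen V) (f : H → ℂ)
    (hPD : ∀ (d : Bool × ℕ), ∀ p ∈ V, DifferentiableAt ℝ (fun τ : ℝ => f (p + τ • dir d)) 0)
    (hC : ∀ d : Bool × ℕ, ContinuousOn (pder (dir d) f) V)
    {q : H} (hq : q ∈ V) (c : ℕ → ℂ) :
    ∀ n, HasDerivAt (fun h : ℝ => f (q + h • Wv c n)) (Phi f c n q) 0 := by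
  intro n
  induction n with
  | zero =>
      simp only [Wv, Phi, Finset.range_zero, Finset.sum_empty, smul_zero, add_zero]
      exact hasDerivAt_const 0 (f q)
  | succ n ih =>
      have hW : Wv c (n + 1) = Wv c n + (c n).re • dir (true, n) + (c n).im • dir (false, n) := by
        rw [Wv, Finset.sum_range_succ, single_decomp, ← add_assoc]
        rfl
      have A₂ := lemB hV f (dir (true, n)) (Wv c n) (c n).re hq (hPD (true, n))
        ((hC (true, n)).continuousAt (hV.mem_nhds hq))
      have A₁ := lemB hV f (dir (false, n)) (Wv c n + (c n).re • dir (true, n)) (c n).im hq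
        (hPD (false, n)) ((hC (false, n)).continuousAt (hV.mem_nhds hq))
      have final := A₁.add (A₂.add ih)
      have e1 : ∀ h : ℝ, q + h • Wv c n + (h * (c n).re) • dir (true, n)
          = q + h • (Wv c n + (c n).re • dir (true, n)) := by
        intro h
        simp only [smul_add, smul_smul]
        abel
      have e2 : ∀ h : ℝ, q + h • (Wv c n + (c n).re • dir (true, n))
            + (h * (c n).im) • dir (false, n) = q + h • Wv c (n + 1) := by
        intro h
        simp only [hW, smul_add, smul_smul]
        abel
      have efun : (fun h : ℝ =>
          (f (q + h • (Wv c n + (c n).re • dir (true, n)) + (h * (c n).im) • dir (false, n))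
            - f (q + h • (Wv c n + (c n).re • dir (true, n))))
          + ((f (q + h • Wv c n + (h * (c n).re) • dir (true, n)) - f (q + h • Wv c n))
            + f (q + h • Wv c n)))
          = fun h : ℝ => f (q + h • Wv c (n + 1)) := by
        funext h
        rw [e1 h, e2 h]
        ring
      have ederiv : Phi f c (n + 1) q =
          (c n).im • pder (dir (false, n)) f q
            + ((c n).re • pder (dir (true, n)) f q + Phi f c n q) := by
        simp only [Phi, Finset.sum_range_succ, Complex.real_smul]
        ring
      rw [ederiv, ← efun]
      exact final

lemma coreLip {V : Set H} (hV : IsOpen V) (f : H → ℂ)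
    (hPD : ∀ (d : Bool × ℕ), ∀ p ∈ V, DifferentiableAt ℝ (fun τ : ℝ => f (p + τ • dir d)) 0)
    (hC : ∀ d : Bool × ℕ, ContinuousOn (pder (dir d) f) V)
    (c : ℕ → ℂ) (n : ℕ) {u : H} {K : ℝ}
    (hseg : ∀ t ∈ Set.Icc (0:ℝ) 1, u + t • Wv c n ∈ V)
    (hbd : ∀ t ∈ Set.Icc (0:ℝ) 1, ‖Phi f c n (u + t • Wv c n)‖ ≤ K) :
    ‖f (u + Wv c n) - f u‖ ≤ K := by
  have hder : ∀ t ∈ Set.Icc (0:ℝ) 1,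
      HasDerivWithinAt (fun τ : ℝ => f (u + τ • Wv c n))
        (Phi f c n (u + t • Wv c n)) (Set.Icc 0 1) t := by
    intro t ht
    have h0 : HasDerivAt (fun h : ℝ => f ((u + t • Wv c n) + h • Wv c n))
        (Phi f c n (u + t • Wv c n)) ((fun τ : ℝ => τ - t) t) := by
      simpa only [sub_self] using derivW hV f hPD hC (hseg t ht) c n
    have h2 : HasDerivAt (fun τ : ℝ => τ - t) 1 t := by
      simpa using (hasDerivAt_id t).sub_const t
    have h3 := HasDerivAt.scomp (h := fun τ : ℝ => τ - t)
      (g₁ := fun h : ℝ => f ((u + t • Wv c n) + h • Wv c n)) t h0 h2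
    have efun : ((fun h : ℝ => f ((u + t • Wv c n) + h • Wv c n)) ∘ (fun τ : ℝ => τ - t))
        = fun τ : ℝ => f (u + τ • Wv c n) := by
      funext τ
      simp only [Function.comp_apply]
      congr 1
      rw [sub_smul]
      abel
    rw [efun] at h3
    simpa using h3.hasDerivWithinAt
  have hmvt := Convex.norm_image_sub_le_of_norm_hasDerivWithin_le hder hbd (convex_Icc 0 1)
      (Set.left_mem_Icc.2 zero_le_one) (Set.right_mem_Icc.2 zero_le_one)
  simpa using hmvt

end PCAux

namespace PCAux

lemma phi_bound (f : H → ℂ) (c : ℕ → ℂ) (n : ℕ) (q : H) :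
    ‖Phi f c n q‖ ≤ Real.sqrt (∑ j ∈ Finset.range n, ‖c j‖ ^ 2) *
      Real.sqrt (∑ j ∈ Finset.range n,
        (‖pder (dir (true, j)) f q‖ ^ 2 + ‖pder (dir (false, j)) f q‖ ^ 2)) := by
  set A := fun j => ‖pder (dir (true, j)) f q‖ with hA
  set B := fun j => ‖pder (dir (false, j)) f q‖ with hB
  have step1 : ‖Phi f c n q‖ ≤
      ∑ j ∈ Finset.range n, ‖c j‖ * Real.sqrt (A j ^ 2 + B j ^ 2) := by
    refine (norm_sum_le _ _).trans (Finset.sum_le_sum fun j _ => ?_)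
    have h1 : ‖(c j).re • pder (dir (true, j)) f q + (c j).im • pder (dir (false, j)) f q‖
        ≤ |(c j).re| * A j + |(c j).im| * B j := by
      refine (norm_add_le _ _).trans ?_
      rw [norm_smul, norm_smul, Real.norm_eq_abs, Real.norm_eq_abs]
    refine h1.trans ?_
    set s := Real.sqrt (A j ^ 2 + B j ^ 2) with hs
    have hA0 : 0 ≤ A j := norm_nonneg _
    have hB0 : 0 ≤ B j := norm_nonneg _
    have hs0 : 0 ≤ s := Real.sqrt_nonneg _
    have hs2 : s ^ 2 = A j ^ 2 + B j ^ 2 := Real.sq_sqrt (by positivity)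
    have hn0 : (0:ℝ) ≤ ‖c j‖ := norm_nonneg _
    have hn2 : ‖c j‖ ^ 2 = (c j).re ^ 2 + (c j).im ^ 2 := by
      rw [Complex.sq_norm, Complex.normSq_apply]
      ring
    nlinarith [sq_nonneg (|(c j).re| * B j - |(c j).im| * A j),
      sq_nonneg (‖c j‖ * s - (|(c j).re| * A j + |(c j).im| * B j)),
      abs_nonneg (c j).re, abs_nonneg (c j).im, sq_abs (c j).re, sq_abs (c j).im,
      mul_nonneg hn0 hs0,
      mul_nonneg (mul_nonneg (abs_nonneg (c j).re) hA0) (mul_nonneg (abs_nonneg (c j).im) hB0)]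
  refine step1.trans ?_
  have hcs := Finset.sum_mul_sq_le_sq_mul_sq (Finset.range n) (fun j => ‖c j‖)
      (fun j => Real.sqrt (A j ^ 2 + B j ^ 2))
  have hg2 : ∀ j, Real.sqrt (A j ^ 2 + B j ^ 2) ^ 2 = A j ^ 2 + B j ^ 2 :=
    fun j => Real.sq_sqrt (by positivity)
  have hnn : (0:ℝ) ≤ ∑ j ∈ Finset.range n, ‖c j‖ * Real.sqrt (A j ^ 2 + B j ^ 2) :=
    Finset.sum_nonneg fun j _ => mul_nonneg (norm_nonneg _) (Real.sqrt_nonneg _)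
  calc ∑ j ∈ Finset.range n, ‖c j‖ * Real.sqrt (A j ^ 2 + B j ^ 2)
      = Real.sqrt ((∑ j ∈ Finset.range n, ‖c j‖ * Real.sqrt (A j ^ 2 + B j ^ 2)) ^ 2) :=
        (Real.sqrt_sq hnn).symm
    _ ≤ Real.sqrt ((∑ j ∈ Finset.range n, ‖c j‖ ^ 2) *
        (∑ j ∈ Finset.range n, Real.sqrt (A j ^ 2 + B j ^ 2) ^ 2)) := Real.sqrt_le_sqrt hcs
    _ = _ := by
        rw [Finset.sum_congr rfl fun j _ => hg2 j,
          Real.sqrt_mul (Finset.sum_nonneg fun j _ => sq_nonneg _)]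

lemma norm_Wv_sq (c : ℕ → ℂ) (n : ℕ) :
    ‖Wv c n‖ ^ 2 = ∑ j ∈ Finset.range n, ‖c j‖ ^ 2 := by
  have h := lp.norm_sum_single (p := 2) (E := fun _ : ℕ => ℂ) (by norm_num) c (Finset.range n)
  rw [show ((2:ℝ≥0∞)).toReal = ((2:ℕ):ℝ) by norm_num] at h
  simp only [Real.rpow_natCast] at h
  exact h

lemma norm_Wv_le (g : H) (n : ℕ) : ‖Wv (fun j => g j) n‖ ≤ ‖g‖ := by
  have h1 := norm_Wv_sq (fun j => g j) n
  have h2 := lp.norm_sub_norm_compl_sub_single (p := 2) (E := fun _ : ℕ => ℂ)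
    (by norm_num) g (Finset.range n)
  rw [show ((2:ℝ≥0∞)).toReal = ((2:ℕ):ℝ) by norm_num] at h2
  simp only [Real.rpow_natCast] at h2
  have hWv : Wv (fun j => g j) n = ∑ i ∈ Finset.range n, lp.single 2 i (g i) := rfl
  have h3 : ‖Wv (fun j => g j) n‖ ^ 2 ≤ ‖g‖ ^ 2 := by
    rw [h1]
    nlinarith [h2, sq_nonneg ‖g - ∑ i ∈ Finset.range n, lp.single 2 i (g i)‖]
  calc ‖Wv (fun j => g j) n‖ = Real.sqrt (‖Wv (fun j => g j) n‖ ^ 2) :=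
        (Real.sqrt_sq (norm_nonneg _)).symm
    _ ≤ Real.sqrt (‖g‖ ^ 2) := Real.sqrt_le_sqrt h3
    _ = ‖g‖ := Real.sqrt_sq (norm_nonneg _)

end PCAux


set_option maxHeartbeats 1000000 in
/-- Elementary properties of a pseudo-convex domain `V` and a
plurisubharmonic exhaustion function `η` of `V`, with `V_τ = {z ∈ V : η z ≤ τ}` and
`V°_τ = interior (V_τ)`: (1) `η` is Lipschitz on each `V_τ`; (2) `V_{τ₁} ⊂∘ V°_{τ₂}`
whenever `τ₁ < τ₂`; (3) every `S ⊂∘ V` satisfies `S ⊂∘ V°_τ` for some `τ`. -/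
theorem pseudoconvex_sublevel_properties
    (V : Set H) (hVo : IsOpen V) (hVne : V.Nonempty)
    (η : H → ℝ) (hη : IsPSHExhaustion V η) :
    (∀ τ : ℝ, ∃ C : ℝ, 0 < C ∧
        ∀ z ∈ {z | z ∈ V ∧ η z ≤ τ}, ∀ z' ∈ {z | z ∈ V ∧ η z ≤ τ},
          |η z - η z'| ≤ C * ‖z - z'‖) ∧
    (∀ τ₁ τ₂ : ℝ, τ₁ < τ₂ →
        UnifIncl {z | z ∈ V ∧ η z ≤ τ₁} (interior {z | z ∈ V ∧ η z ≤ τ₂})) ∧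
    (∀ S : Set H, UnifIncl S V →
        ∃ τ : ℝ, UnifIncl S (interior {z | z ∈ V ∧ η z ≤ τ})) := by
  obtain ⟨hsm, hFB, hexh, -⟩ := hη
  set f : H → ℂ := cplx η with hf
  have hcontf : ContinuousOn f V := (hsm 0).1 [] (by norm_num)
  have hPD : ∀ (d : Bool × ℕ), ∀ p ∈ V, DifferentiableAt ℝ (fun τ : ℝ => f (p + τ • dir d)) 0 :=
    fun d p hp => (hsm 1).2 [] (by norm_num) d p hp
  have hC : ∀ d : Bool × ℕ, ContinuousOn (pder (dir d) f) V :=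
    fun d => (hsm 1).1 [d] (by norm_num)
  have habs : ∀ a b : H, |η a - η b| = ‖f a - f b‖ := by
    intro a b
    rw [hf]
    simp only [cplx, ← Complex.ofReal_sub, Complex.norm_real, Real.norm_eq_abs]
  have hnf : ∀ a : H, ‖f a‖ = |η a| := by
    intro a
    rw [hf]
    simp only [cplx, Complex.norm_real, Real.norm_eq_abs]
  -- Part 1
  have part1 : ∀ τ : ℝ, ∃ C : ℝ, 0 < C ∧
      ∀ z ∈ {z | z ∈ V ∧ η z ≤ τ}, ∀ z' ∈ {z | z ∈ V ∧ η z ≤ τ},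
        |η z - η z'| ≤ C * ‖z - z'‖ := by
    intro τ
    obtain ⟨r, R, hr, hR, hball, hbd⟩ := hexh τ
    set Vτ := {z | z ∈ V ∧ η z ≤ τ} with hVτ
    set E : Set H := ⋃ x ∈ Vτ, Metric.ball x (r / 2) with hE
    have hEb : ∀ x ∈ Vτ, Metric.ball x (r / 2) ⊆ E := by
      intro x hx w hw
      exact Set.mem_iUnion₂.2 ⟨x, hx, hw⟩
    have hEV1 : ∀ w ∈ E, Metric.ball w (r / 2) ⊆ V := by
      intro w hw
      obtain ⟨x, hx, hwx⟩ := Set.mem_iUnion₂.1 hw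
      refine (Metric.ball_subset_ball' ?_).trans (hball x hx)
      rw [Metric.mem_ball] at hwx
      linarith
    have hEV2 : E ⊆ Metric.ball 0 (R + r / 2) := by
      intro w hw
      obtain ⟨x, hx, hwx⟩ := Set.mem_iUnion₂.1 hw
      have hx' := hbd hx
      rw [Metric.mem_ball] at hx' hwx ⊢
      have := dist_triangle w x 0
      linarith
    have hEV : UnifIncl E V := ⟨r / 2, R + r / 2, by positivity, by positivity, hEV1, hEV2⟩
    have hEsubV : E ⊆ V := fun w hw => hEV1 w hw (Metric.mem_ball_self (by positivity))
    obtain ⟨M, hM⟩ := hFB E hEV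
    set M₀ := |M| with hM₀
    have hM₀0 : (0:ℝ) ≤ M₀ := abs_nonneg M
    have hfE : ∀ w ∈ E, ‖f w‖ ≤ M₀ := by
      intro w hw
      have h1 : ENNReal.ofReal ‖f w‖ ≤ ENNReal.ofReal M₀ :=
        le_trans (le_trans le_self_add (hM w hw)) (ENNReal.ofReal_le_ofReal (le_abs_self M))
      exact (ENNReal.ofReal_le_ofReal_iff hM₀0).1 h1
    have hsum : ∀ w ∈ E, ∀ n : ℕ,
        ∑ j ∈ Finset.range n,
          (‖pder (dir (true, j)) f w‖ ^ 2 + ‖pder (dir (false, j)) f w‖ ^ 2) ≤ M₀ := by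
      intro w hw n
      have h1 : ∑ j ∈ Finset.range n, (ENNReal.ofReal (‖coordD (true, j) f w‖ ^ 2) +
          ENNReal.ofReal (‖coordD (false, j) f w‖ ^ 2)) ≤ ENNReal.ofReal M₀ := by
        refine le_trans (ENNReal.sum_le_tsum _) ?_
        exact le_trans (le_trans le_add_self (hM w hw))
          (ENNReal.ofReal_le_ofReal (le_abs_self M))
      have h2 : ∑ j ∈ Finset.range n, (ENNReal.ofReal (‖coordD (true, j) f w‖ ^ 2) +
          ENNReal.ofReal (‖coordD (false, j) f w‖ ^ 2)) =
          ENNReal.ofReal (∑ j ∈ Finset.range n,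
            (‖pder (dir (true, j)) f w‖ ^ 2 + ‖pder (dir (false, j)) f w‖ ^ 2)) := by
        rw [ENNReal.ofReal_sum_of_nonneg (fun j _ => by positivity)]
        refine Finset.sum_congr rfl fun j _ => ?_
        rw [ENNReal.ofReal_add (by positivity) (by positivity)]
        rfl
      rw [h2] at h1
      exact (ENNReal.ofReal_le_ofReal_iff hM₀0).1 h1
    set K := Real.sqrt M₀ with hK
    have hK0 : (0:ℝ) ≤ K := Real.sqrt_nonneg _
    refine ⟨max (16 * (M₀ + 1) / r) (K + 1),
      lt_of_lt_of_le (by positivity) (le_max_left _ _), ?_⟩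
    rintro z hz z' hz'
    have hzE : z ∈ E := hEb z hz (Metric.mem_ball_self (by positivity))
    have hz'E : z' ∈ E := hEb z' hz' (Metric.mem_ball_self (by positivity))
    by_cases hfar : r / 8 ≤ ‖z - z'‖
    · have h1 : |η z - η z'| ≤ 2 * M₀ + 2 := by
        have h2 := hfE z hzE
        have h3 := hfE z' hz'E
        rw [habs]
        calc ‖f z - f z'‖ ≤ ‖f z‖ + ‖f z'‖ := norm_sub_le _ _
          _ ≤ 2 * M₀ + 2 := by linarith
      calc |η z - η z'| ≤ 2 * M₀ + 2 := h1
        _ = (16 * (M₀ + 1) / r) * (r / 8) := by field_simp; ring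
        _ ≤ (16 * (M₀ + 1) / r) * ‖z - z'‖ :=
            mul_le_mul_of_nonneg_left hfar (by positivity)
        _ ≤ max (16 * (M₀ + 1) / r) (K + 1) * ‖z - z'‖ :=
            mul_le_mul_of_nonneg_right (le_max_left _ _) (norm_nonneg _)
    · push_neg at hfar
      have hKmax : K ≤ max (16 * (M₀ + 1) / r) (K + 1) :=
        le_trans (by linarith) (le_max_right _ _)
      have key : ∀ ε > (0:ℝ), |η z - η z'| ≤ K * ‖z - z'‖ + ε := by
        intro ε hε
        have hcz' : ContinuousAt f z' := hcontf.continuousAt (hVo.mem_nhds hz'.1)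
        obtain ⟨δ₁, hδ₁, hcb⟩ := Metric.continuousAt_iff.1 hcz' ε hε
        have hHS := (lp.hasSum_single (E := fun _ : ℕ => ℂ) (p := 2)
          (by norm_num) (z' - z)).tendsto_sum_nat
        obtain ⟨n, hn⟩ := (Metric.tendsto_atTop.1 hHS) δ₁ hδ₁
        have hn' := hn n le_rfl
        set c : ℕ → ℂ := fun j => (z' - z) j with hc
        set w : H := PCAux.Wv c n with hw
        have htail : ‖w - (z' - z)‖ < δ₁ := by
          have : dist (∑ i ∈ Finset.range n, lp.single 2 i ((z' - z) i)) (z' - z) < δ₁ := hn'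
          rw [dist_eq_norm] at this
          exact this
        have hwle : ‖w‖ ≤ ‖z' - z‖ := PCAux.norm_Wv_le (z' - z) n
        have hnz : ‖z' - z‖ = ‖z - z'‖ := norm_sub_rev _ _
        have hseg : ∀ t ∈ Set.Icc (0:ℝ) 1, z + t • w ∈ E := by
          intro t ht
          apply hEb z hz
          rw [Metric.mem_ball, dist_eq_norm]
          have e : z + t • w - z = t • w := by abel
          rw [e, norm_smul, Real.norm_eq_abs]
          have h1 : |t| ≤ 1 := abs_le.2 ⟨by linarith [ht.1], ht.2⟩
          nlinarith [norm_nonneg w, abs_nonneg t]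
        have hsegV : ∀ t ∈ Set.Icc (0:ℝ) 1, z + t • PCAux.Wv c n ∈ V :=
          fun t ht => hEsubV (hseg t ht)
        have hPhi : ∀ t ∈ Set.Icc (0:ℝ) 1,
            ‖PCAux.Phi f c n (z + t • PCAux.Wv c n)‖ ≤ K * ‖w‖ := by
          intro t ht
          refine (PCAux.phi_bound f c n _).trans ?_
          have h1 : Real.sqrt (∑ j ∈ Finset.range n, ‖c j‖ ^ 2) = ‖w‖ := by
            rw [← PCAux.norm_Wv_sq c n, Real.sqrt_sq (norm_nonneg _)]
          have h2 : Real.sqrt (∑ j ∈ Finset.range n,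
              (‖pder (dir (true, j)) f (z + t • PCAux.Wv c n)‖ ^ 2 +
                ‖pder (dir (false, j)) f (z + t • PCAux.Wv c n)‖ ^ 2)) ≤ K := by
            rw [hK]
            exact Real.sqrt_le_sqrt (hsum _ (hseg t ht) n)
          rw [h1]
          calc ‖w‖ * Real.sqrt (∑ j ∈ Finset.range n,
              (‖pder (dir (true, j)) f (z + t • PCAux.Wv c n)‖ ^ 2 +
                ‖pder (dir (false, j)) f (z + t • PCAux.Wv c n)‖ ^ 2))
              ≤ ‖w‖ * K := mul_le_mul_of_nonneg_left h2 (norm_nonneg _)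
            _ = K * ‖w‖ := mul_comm _ _
        have hcore := PCAux.coreLip hVo f hPD hC c n hsegV hPhi
        have hz'' : |η (z + w) - η z'| ≤ ε := by
          rw [habs]
          have hd : dist (z + w) z' < δ₁ := by
            rw [dist_eq_norm]
            have e : z + w - z' = w - (z' - z) := by abel
            rw [e]
            exact htail
          have := hcb hd
          rw [dist_eq_norm] at this
          exact this.le
        have h1 : |η z - η (z + w)| ≤ K * ‖w‖ := by
          rw [habs, norm_sub_rev]
          exact hcore
        calc |η z - η z'| ≤ |η z - η (z + w)| + |η (z + w) - η z'| := abs_sub_le _ _ _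
          _ ≤ K * ‖w‖ + ε := add_le_add h1 hz''
          _ ≤ K * ‖z - z'‖ + ε := by
              have h2 : ‖w‖ ≤ ‖z - z'‖ := hwle.trans (le_of_eq hnz)
              nlinarith
      have hfin : |η z - η z'| ≤ K * ‖z - z'‖ := by
        refine le_of_forall_pos_le_add ?_
        intro ε hε
        exact key ε hε
      exact hfin.trans (mul_le_mul_of_nonneg_right hKmax (norm_nonneg _))
  refine ⟨part1, ?_, ?_⟩
  -- Part 2
  · intro τ₁ τ₂ hττ
    obtain ⟨C, hC0, hLip⟩ := part1 τ₂
    obtain ⟨r, R, hr, hR, hball, hbd⟩ := hexh τ₂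
    obtain ⟨r₁, R₁, hr₁, hR₁, hball₁, hbd₁⟩ := hexh τ₁
    set ρ := min (r / 2) ((τ₂ - τ₁) / (2 * C)) with hρ
    have hρ0 : 0 < ρ := lt_min (by positivity) (div_pos (by linarith) (by positivity))
    have hsub1 : {z | z ∈ V ∧ η z ≤ τ₁} ⊆ {z | z ∈ V ∧ η z ≤ τ₂} :=
      fun x hx => ⟨hx.1, hx.2.trans (le_of_lt hττ)⟩
    refine ⟨ρ, R₁, hρ0, hR₁, ?_, hbd₁⟩
    intro z hz
    have hz2 : z ∈ {z | z ∈ V ∧ η z ≤ τ₂} := hsub1 hz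
    have hballV : Metric.ball z r ⊆ V := hball z hz2
    have hmain : Metric.ball z ρ ⊆ {z | z ∈ V ∧ η z ≤ τ₂} := by
      intro y hy
      rw [Metric.mem_ball, dist_eq_norm] at hy
      set γ : ℝ → H := fun t => z + t • (y - z) with hγ
      have hρr : ρ ≤ r / 2 := min_le_left _ _
      have hγV : ∀ t ∈ Set.Icc (0:ℝ) 1, γ t ∈ V := by
        intro t ht
        apply hballV
        rw [Metric.mem_ball, dist_eq_norm]
        have e : γ t - z = t • (y - z) := by simp only [hγ]; exact add_sub_cancel_left z _
        rw [e, norm_smul, Real.norm_eq_abs]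
        have h1 : |t| ≤ 1 := abs_le.2 ⟨by linarith [ht.1], ht.2⟩
        nlinarith [norm_nonneg (y - z), abs_nonneg t]
      set φ : ℝ → ℝ := fun t => η (γ t) with hφ
      have hφc : ContinuousOn φ (Set.Icc 0 1) := by
        have hγc : Continuous γ := by
          rw [hγ]
          exact continuous_const.add (continuous_id.smul continuous_const)
        have hfc : ContinuousOn (fun t => f (γ t)) (Set.Icc 0 1) :=
          hcontf.comp hγc.continuousOn hγV
        have hφre : φ = fun t => (f (γ t)).re := by
          funext t
          rw [hφ, hf]
          simp [cplx]
        rw [hφre]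
        exact Complex.continuous_re.comp_continuousOn hfc
      set A := {t | t ∈ Set.Icc (0:ℝ) 1 ∧ φ t ≤ τ₂} with hA
      have hφ0 : φ 0 = η z := by rw [hφ]; simp [hγ]
      have hA0 : (0:ℝ) ∈ A := ⟨⟨le_refl 0, zero_le_one⟩, by rw [hφ0]; exact hz2.2⟩
      have hAbdd : BddAbove A := ⟨1, fun t ht => ht.1.2⟩
      have hAclosed : IsClosed A := by
        have : A = Set.Icc (0:ℝ) 1 ∩ φ ⁻¹' (Set.Iic τ₂) := by
          ext t
          simp only [hA, Set.mem_setOf_eq, Set.mem_inter_iff, Set.mem_preimage, Set.mem_Iic]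
        rw [this]
        exact hφc.preimage_isClosed_of_isClosed isClosed_Icc isClosed_Iic
      set T := sSup A with hT
      have hTA : T ∈ A := hAclosed.csSup_mem ⟨0, hA0⟩ hAbdd
      have hγT2 : γ T ∈ {z | z ∈ V ∧ η z ≤ τ₂} := ⟨hγV T hTA.1, hTA.2⟩
      have hρC : C * ρ ≤ (τ₂ - τ₁) / 2 := by
        have h2 : ρ ≤ (τ₂ - τ₁) / (2 * C) := min_le_right _ _
        calc C * ρ ≤ C * ((τ₂ - τ₁) / (2 * C)) := mul_le_mul_of_nonneg_left h2 (le_of_lt hC0)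
          _ = (τ₂ - τ₁) / 2 := by field_simp
      have hφle : ∀ t, t ∈ A → φ t < τ₂ := by
        intro t htA
        have hγt2 : γ t ∈ {z | z ∈ V ∧ η z ≤ τ₂} := ⟨hγV t htA.1, htA.2⟩
        have hnorm : ‖γ t - z‖ ≤ ρ := by
          have e : γ t - z = t • (y - z) := by simp only [hγ]; exact add_sub_cancel_left z _
          rw [e, norm_smul, Real.norm_eq_abs]
          have h1 : |t| ≤ 1 := abs_le.2 ⟨by linarith [htA.1.1], htA.1.2⟩
          nlinarith [norm_nonneg (y - z), abs_nonneg t]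
        have h3 := (le_abs_self (η (γ t) - η z)).trans
          ((hLip (γ t) hγt2 z hz2).trans (mul_le_mul_of_nonneg_left hnorm (le_of_lt hC0)))
        have h4 : φ t ≤ η z + C * ρ := by
          rw [hφ]
          linarith
        have : η z ≤ τ₁ := hz.2
        linarith
      have hT1 : T = 1 := by
        by_contra hne
        have hTlt : T < 1 := lt_of_le_of_ne hTA.1.2 hne
        have hcw : ContinuousWithinAt φ (Set.Icc 0 1) T := hφc T hTA.1
        have hev1 : ∀ᶠ t in nhdsWithin T (Set.Icc 0 1), φ t < τ₂ :=
          hcw (Iio_mem_nhds (hφle T hTA))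
        have hmono : nhdsWithin T (Set.Ioc T 1) ≤ nhdsWithin T (Set.Icc 0 1) :=
          nhdsWithin_mono T (fun x hx => ⟨hTA.1.1.trans (le_of_lt hx.1), hx.2⟩)
        have hne2 : (nhdsWithin T (Set.Ioc T 1)).NeBot := by
          rw [← mem_closure_iff_nhdsWithin_neBot, closure_Ioc (ne_of_lt hTlt)]
          exact ⟨le_refl T, le_of_lt hTlt⟩
        have hev1' : ∀ᶠ t in nhdsWithin T (Set.Ioc T 1), φ t < τ₂ := hmono hev1
        have hev2 : ∀ᶠ t in nhdsWithin T (Set.Ioc T 1), φ t < τ₂ ∧ t ∈ Set.Ioc T 1 :=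
          hev1'.and eventually_mem_nhdsWithin
        obtain ⟨t, htφ, htmem⟩ := hev2.exists
        have htA : t ∈ A :=
          ⟨⟨hTA.1.1.trans (le_of_lt htmem.1), htmem.2⟩, le_of_lt htφ⟩
        exact absurd (le_csSup hAbdd htA) (not_le.2 htmem.1)
      have hγ1 : γ 1 = y := by rw [hγ]; simp
      refine ⟨?_, ?_⟩
      · apply hballV
        rw [Metric.mem_ball, dist_eq_norm]
        have : ρ ≤ r := hρr.trans (by linarith)
        linarith
      · have := hTA.2
        rw [hT1] at this
        have hφ1 : φ 1 = η y := by simp only [hφ]; rw [hγ1]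
        rw [hφ1] at this
        exact this
    exact interior_maximal hmain Metric.isOpen_ball
  -- Part 3
  · intro S hS
    obtain ⟨r, R, hr, hR, hball, hbd⟩ := hS
    set E : Set H := ⋃ x ∈ S, Metric.ball x (r / 2) with hE
    have hEV1 : ∀ w ∈ E, Metric.ball w (r / 2) ⊆ V := by
      intro w hw
      obtain ⟨x, hx, hwx⟩ := Set.mem_iUnion₂.1 hw
      refine (Metric.ball_subset_ball' ?_).trans (hball x hx)
      rw [Metric.mem_ball] at hwx
      linarith
    have hEV2 : E ⊆ Metric.ball 0 (R + r / 2) := by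
      intro w hw
      obtain ⟨x, hx, hwx⟩ := Set.mem_iUnion₂.1 hw
      have hx' := hbd hx
      rw [Metric.mem_ball] at hx' hwx ⊢
      have := dist_triangle w x 0
      linarith
    have hEV : UnifIncl E V := ⟨r / 2, R + r / 2, by positivity, by positivity, hEV1, hEV2⟩
    have hEsubV : E ⊆ V := fun w hw => hEV1 w hw (Metric.mem_ball_self (by positivity))
    obtain ⟨M, hM⟩ := hFB E hEV
    refine ⟨|M|, r / 2, R, by positivity, hR, ?_, hbd⟩
    intro z hz
    have hsub : Metric.ball z (r / 2) ⊆ {w | w ∈ V ∧ η w ≤ |M|} := by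
      intro x hx
      have hxE : x ∈ E := Set.mem_iUnion₂.2 ⟨z, hz, hx⟩
      refine ⟨hEsubV hxE, ?_⟩
      have h1 : ENNReal.ofReal ‖f x‖ ≤ ENNReal.ofReal |M| :=
        le_trans (le_trans le_self_add (hM x hxE)) (ENNReal.ofReal_le_ofReal (le_abs_self M))
      have h2 : ‖f x‖ ≤ |M| := (ENNReal.ofReal_le_ofReal_iff (abs_nonneg M)).1 h1
      rw [hnf] at h2
      exact (le_abs_self (η x)).trans h2
    exact interior_maximal hsub Metric.isOpen_ball

end
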